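/- Suppose P : ℝ → ℝ^{n×k} and Q : ℝ → ℝ^{m×k} are differentiable and satisfy the perturbed gradient flow Ṗ = (Ȳ − PQᵀ)Q + U, Q̇ = (Ȳ − PQᵀ)ᵀP + V. Then the loss L(P,Q) = (1/2)‖Ȳ − PQᵀ‖_F² satisfies d/dt L(P(t),Q(t)) ≤ −L(P,Q)·(σ_min(P)² + σ_min(Q)²) + (1/2)(‖U‖_F² + ‖V‖_F²). -/

import Mathlib

open Matrix

attribute [local instance] Matrix.normedAddCommGroup Matrix.normedSpace

/-- Squared Frobenius norm of a real matrix. -/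
noncomputable def frobSq {p o : ℕ} (A : Matrix (Fin p) (Fin o) ℝ) : ℝ :=
  ∑ i, ∑ j, (A i j) ^ 2

/-- Square of the smallest singular value of `B` (acting on row vectors `v ↦ v B`). -/
noncomputable def sminSq {o q : ℕ} (B : Matrix (Fin o) (Fin q) ℝ) : ℝ :=
  sInf {c : ℝ | ∃ v : Fin o → ℝ, (∑ i, (v i) ^ 2) = 1 ∧ c = ∑ j, (∑ i, v i * B i j) ^ 2}

noncomputable def entryCLM (a b : ℕ) (i : Fin a) (j : Fin b) :
    Matrix (Fin a) (Fin b) ℝ →L[ℝ] ℝ :=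
  LinearMap.toContinuousLinearMap
    { toFun := fun A => A i j
      map_add' := fun _ _ => rfl
      map_smul' := fun _ _ => rfl }

lemma frobSq_nonneg {p o : ℕ} (A : Matrix (Fin p) (Fin o) ℝ) : 0 ≤ frobSq A := by
  unfold frobSq; positivity

lemma frobSq_transpose {p o : ℕ} (A : Matrix (Fin p) (Fin o) ℝ) : frobSq Aᵀ = frobSq A := by
  unfold frobSq
  simp only [transpose_apply]
  exact Finset.sum_comm

lemma sminSq_row {o q : ℕ} (B : Matrix (Fin o) (Fin q) ℝ) (v : Fin o → ℝ) :
    sminSq B * (∑ i, v i ^ 2) ≤ ∑ j, (∑ i, v i * B i j) ^ 2 := by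
  set s2 := ∑ i, v i ^ 2 with hs2
  have hs2nn : 0 ≤ s2 := Finset.sum_nonneg fun _ _ => sq_nonneg _
  rcases eq_or_lt_of_le hs2nn with h0 | hpos
  · have hv : ∀ i, v i = 0 := by
      intro i
      have := (Finset.sum_eq_zero_iff_of_nonneg (fun i _ => sq_nonneg (v i))).mp h0.symm i
        (Finset.mem_univ i)
      exact pow_eq_zero_iff (two_ne_zero) |>.mp this
    have : s2 = 0 := h0.symm
    rw [this, mul_zero]
    apply Finset.sum_nonneg; intro j _; positivity
  · have hsq : Real.sqrt s2 ^ 2 = s2 := Real.sq_sqrt hs2nn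
    have hsqpos : (0:ℝ) < Real.sqrt s2 := Real.sqrt_pos.mpr hpos
    have hmem : (∑ j, (∑ i, v i * B i j) ^ 2) / s2 ∈
        {c : ℝ | ∃ w : Fin o → ℝ, (∑ i, (w i) ^ 2) = 1 ∧ c = ∑ j, (∑ i, w i * B i j) ^ 2} := by
      refine ⟨fun i => v i / Real.sqrt s2, ?_, ?_⟩
      · have : ∀ i, (v i / Real.sqrt s2) ^ 2 = v i ^ 2 / s2 := by
          intro i; rw [div_pow, hsq]
        simp_rw [this]
        rw [← Finset.sum_div, div_self (ne_of_gt hpos)]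
      · have : ∀ j, (∑ i, (v i / Real.sqrt s2) * B i j) ^ 2 = (∑ i, v i * B i j) ^ 2 / s2 := by
          intro j
          have : ∑ i, (v i / Real.sqrt s2) * B i j = (∑ i, v i * B i j) / Real.sqrt s2 := by
            rw [Finset.sum_div]
            congr 1; funext i; ring
          rw [this, div_pow, hsq]
        simp_rw [this]
        rw [← Finset.sum_div]
    have hbdd : BddBelow {c : ℝ | ∃ w : Fin o → ℝ, (∑ i, (w i) ^ 2) = 1 ∧
        c = ∑ j, (∑ i, w i * B i j) ^ 2} := by
      refine ⟨0, fun c hc => ?_⟩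
      obtain ⟨w, _, rfl⟩ := hc
      positivity
    have hinf : sminSq B ≤ (∑ j, (∑ i, v i * B i j) ^ 2) / s2 := csInf_le hbdd hmem
    calc sminSq B * s2 ≤ ((∑ j, (∑ i, v i * B i j) ^ 2) / s2) * s2 :=
          mul_le_mul_of_nonneg_right hinf hs2nn
      _ = ∑ j, (∑ i, v i * B i j) ^ 2 := by field_simp

lemma sminSq_mul_frobSq_le {p o q : ℕ} (A : Matrix (Fin p) (Fin o) ℝ)
    (B : Matrix (Fin o) (Fin q) ℝ) :
    sminSq B * frobSq A ≤ frobSq (A * B) := by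
  have h : frobSq (A * B) = ∑ i, ∑ j, (∑ l, A i l * B l j) ^ 2 := by
    simp [frobSq, Matrix.mul_apply]
  rw [h, frobSq, Finset.mul_sum]
  exact Finset.sum_le_sum fun i _ => sminSq_row B (A i)

noncomputable def trIp {p o : ℕ} (A B : Matrix (Fin p) (Fin o) ℝ) : ℝ :=
  Matrix.trace (Aᵀ * B)

lemma trIp_eq {p o : ℕ} (A B : Matrix (Fin p) (Fin o) ℝ) :
    trIp A B = ∑ i, ∑ j, A i j * B i j := by
  simp only [trIp, Matrix.trace, Matrix.diag, Matrix.mul_apply, Matrix.transpose_apply]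
  exact Finset.sum_comm

lemma frobSq_eq_trIp {p o : ℕ} (A : Matrix (Fin p) (Fin o) ℝ) : frobSq A = trIp A A := by
  rw [trIp_eq]; simp [frobSq, sq]

lemma trIp_comm {p o : ℕ} (A B : Matrix (Fin p) (Fin o) ℝ) : trIp A B = trIp B A := by
  rw [trIp_eq, trIp_eq]; congr 1; funext i; congr 1; funext j; ring

lemma trIp_mulT {p o q : ℕ} (E : Matrix (Fin p) (Fin o) ℝ) (X : Matrix (Fin p) (Fin q) ℝ)
    (B : Matrix (Fin o) (Fin q) ℝ) :
    trIp E (X * Bᵀ) = trIp (E * B) X := by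
  unfold trIp
  rw [← Matrix.mul_assoc, Matrix.trace_mul_comm, ← Matrix.mul_assoc, ← Matrix.transpose_mul]

lemma trIp_lmul {p o q : ℕ} (E : Matrix (Fin p) (Fin o) ℝ) (A : Matrix (Fin p) (Fin q) ℝ)
    (X : Matrix (Fin o) (Fin q) ℝ) :
    trIp E (A * Xᵀ) = trIp (Eᵀ * A) X := by
  unfold trIp
  rw [← Matrix.mul_assoc, Matrix.trace_mul_comm]
  rw [show Xᵀ * (Eᵀ * A) = ((Eᵀ * A)ᵀ * X)ᵀ by rw [Matrix.transpose_mul, transpose_transpose]]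
  rw [Matrix.trace_transpose]

lemma trIp_add_right {p o : ℕ} (A B C : Matrix (Fin p) (Fin o) ℝ) :
    trIp A (B + C) = trIp A B + trIp A C := by
  unfold trIp; rw [Matrix.mul_add, Matrix.trace_add]

lemma neg_trIp_le {p o : ℕ} (A B : Matrix (Fin p) (Fin o) ℝ) :
    -trIp A B ≤ 1 / 2 * (frobSq A + frobSq B) := by
  rw [trIp_eq, frobSq, frobSq]
  have h : ∀ i ∈ (Finset.univ : Finset (Fin p)),
      -(∑ j, A i j * B i j) ≤ ∑ j, (1/2 * ((A i j)^2 + (B i j)^2)) := by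
    intro i _
    rw [← Finset.sum_neg_distrib]
    refine Finset.sum_le_sum fun j _ => ?_
    nlinarith [sq_nonneg (A i j + B i j)]
  calc -(∑ i, ∑ j, A i j * B i j) = ∑ i, -(∑ j, A i j * B i j) := by
        rw [Finset.sum_neg_distrib]
    _ ≤ ∑ i, ∑ j, (1/2 * ((A i j)^2 + (B i j)^2)) := Finset.sum_le_sum h
    _ = 1/2 * ((∑ i, ∑ j, (A i j)^2) + ∑ i, ∑ j, (B i j)^2) := by
        simp only [mul_add, Finset.sum_add_distrib, Finset.mul_sum]

theorem stmt2 {n m k : ℕ} (Y : Matrix (Fin n) (Fin m) ℝ)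
    (P U : ℝ → Matrix (Fin n) (Fin k) ℝ) (Q V : ℝ → Matrix (Fin m) (Fin k) ℝ)
    (hP : ∀ t, HasDerivAt P ((Y - P t * (Q t)ᵀ) * Q t + U t) t)
    (hQ : ∀ t, HasDerivAt Q ((Y - P t * (Q t)ᵀ)ᵀ * P t + V t) t)
    (t : ℝ) :
    ∃ L' : ℝ, HasDerivAt (fun s => (1 : ℝ) / 2 * frobSq (Y - P s * (Q s)ᵀ)) L' t ∧
      L' ≤ -((1 : ℝ) / 2 * frobSq (Y - P t * (Q t)ᵀ)) * (sminSq (P t) + sminSq (Q t))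
            + (1 : ℝ) / 2 * (frobSq (U t) + frobSq (V t)) := by
  set A := P t with hA
  set B := Q t with hB
  set E := Y - A * Bᵀ with hE
  set Pd := E * B + U t with hPd
  set Qd := Eᵀ * A + V t with hQd
  have hPij : ∀ i l, HasDerivAt (fun s => P s i l) (Pd i l) t := fun i l =>
    (entryCLM n k i l).hasFDerivAt.comp_hasDerivAt t (hP t)
  have hQij : ∀ j l, HasDerivAt (fun s => Q s j l) (Qd j l) t := fun j l =>
    (entryCLM m k j l).hasFDerivAt.comp_hasDerivAt t (hQ t)
  have hEij : ∀ i j, HasDerivAt (fun s => Y i j - ∑ l, P s i l * Q s j l)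
      (-(∑ l, (Pd i l * B j l + A i l * Qd j l))) t := by
    intro i j
    have hs : HasDerivAt (fun s => ∑ l, P s i l * Q s j l)
        (∑ l, (Pd i l * B j l + A i l * Qd j l)) t :=
      HasDerivAt.fun_sum fun l _ => (hPij i l).mul (hQij j l)
    exact hs.const_sub (Y i j)
  have hL : HasDerivAt (fun s => (1:ℝ)/2 * ∑ i, ∑ j, (Y i j - ∑ l, P s i l * Q s j l)^2)
      ((1:ℝ)/2 * ∑ i, ∑ j, ((2:ℕ) * (Y i j - ∑ l, A i l * B j l)^(2-1) *
        (-(∑ l, (Pd i l * B j l + A i l * Qd j l))))) t := by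
    exact ((HasDerivAt.fun_sum fun i _ => HasDerivAt.fun_sum fun j _ =>
      (hEij i j).fun_pow 2).const_mul ((1:ℝ)/2))
  have hfun : (fun s => (1 : ℝ) / 2 * frobSq (Y - P s * (Q s)ᵀ)) =
      (fun s => (1:ℝ)/2 * ∑ i, ∑ j, (Y i j - ∑ l, P s i l * Q s j l)^2) := by
    funext s
    simp [frobSq, Matrix.sub_apply, Matrix.mul_apply, Matrix.transpose_apply]
  have hEent : ∀ i j, E i j = Y i j - ∑ l, A i l * B j l := by
    intro i j
    simp [hE, Matrix.sub_apply, Matrix.mul_apply, Matrix.transpose_apply]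
  have hval : (1:ℝ)/2 * ∑ i, ∑ j, ((2:ℕ) * (Y i j - ∑ l, A i l * B j l)^(2-1) *
        (-(∑ l, (Pd i l * B j l + A i l * Qd j l)))) =
      -(trIp E (Pd * Bᵀ) + trIp E (A * Qdᵀ)) := by
    rw [← trIp_add_right, trIp_eq, ← Finset.sum_neg_distrib, Finset.mul_sum]
    refine Finset.sum_congr rfl fun i _ => ?_
    rw [← Finset.sum_neg_distrib, Finset.mul_sum]
    refine Finset.sum_congr rfl fun j _ => ?_
    rw [← hEent]
    simp only [Matrix.add_apply, Matrix.mul_apply, Matrix.transpose_apply,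
      Finset.sum_add_distrib]
    norm_num
    ring
  refine ⟨_, hfun ▸ hL, ?_⟩
  rw [hval]
  have e1 : trIp E (Pd * Bᵀ) = frobSq (E * B) + trIp (E * B) (U t) := by
    rw [trIp_mulT, hPd, trIp_add_right, ← frobSq_eq_trIp]
  have e2 : trIp E (A * Qdᵀ) = frobSq (Eᵀ * A) + trIp (Eᵀ * A) (V t) := by
    rw [trIp_lmul, hQd, trIp_add_right, ← frobSq_eq_trIp]
  rw [e1, e2]
  have h1 := neg_trIp_le (E * B) (U t)
  have h2 := neg_trIp_le (Eᵀ * A) (V t)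
  have h3 := sminSq_mul_frobSq_le E B
  have h4 : sminSq A * frobSq E ≤ frobSq (Eᵀ * A) := by
    have := sminSq_mul_frobSq_le Eᵀ A
    rwa [frobSq_transpose] at this
  have hrw : -((1 : ℝ) / 2 * frobSq E) * (sminSq A + sminSq B) =
      -(1/2) * (sminSq A * frobSq E) - 1/2 * (sminSq B * frobSq E) := by ring
  rw [hrw]
  linarith
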